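/- arXiv:2112.08225 — 3 statements merged into one kernel-verified Lean document; each statement's English description precedes it below -/
import Mathlib

section
/- (Equality case of generalized Young's inequality) Let γ be a class K∞ function with class K∞ derivative γ'. For nonzero x, y ∈ ℝⁿ, ⟨x, y⟩ = γ(‖x‖) + ℓγ(‖y‖) if and only if y = γ'(‖x‖)·x/‖x‖. -/
open Set intervalIntegral
open scoped RealInnerProductSpace

-- step bound lemma
lemma young_psi_step (γ γ' γinv : ℝ → ℝ)
    (hderiv : ∀ x ∈ Ici (0:ℝ), HasDerivAt γ (γ' x) x)
    (hγ'0 : γ' 0 = 0) (hγ'mono : StrictMonoOn γ' (Ici 0))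
    (hγ'cont : ContinuousOn γ' (Ici 0))
    (hinv_nonneg : ∀ r ∈ Ici (0:ℝ), γinv r ∈ Ici (0:ℝ))
    (hinv_right : ∀ r ∈ Ici (0:ℝ), γ' (γinv r) = r)
    (hinv_left : ∀ r ∈ Ici (0:ℝ), γinv (γ' r) = r)
    {s t : ℝ} (hs : 0 ≤ s) (hst : s ≤ t) :
    |(γ t + (∫ u in (0:ℝ)..γ' t, γinv u) - t * γ' t)
      - (γ s + (∫ u in (0:ℝ)..γ' s, γinv u) - s * γ' s)|
      ≤ (t - s) * (γ' t - γ' s) := by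
  have ht : (0:ℝ) ≤ t := hs.trans hst
  have hinvmono : MonotoneOn γinv (Ici 0) := by
    intro r hr r' hr' hle
    by_contra hc
    push_neg at hc
    have := hγ'mono (hinv_nonneg r' hr') (hinv_nonneg r hr) hc
    rw [hinv_right r hr, hinv_right r' hr'] at this
    exact absurd this (not_lt.mpr hle)
  have hs' : (0:ℝ) ≤ γ' s := by rw [← hγ'0]; exact hγ'mono.monotoneOn self_mem_Ici hs hs
  have ht' : γ' s ≤ γ' t := hγ'mono.monotoneOn hs ht hst
  have ht'0 : (0:ℝ) ≤ γ' t := hs'.trans ht'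
  -- integral of γ' over s..t
  have hIγ' : IntervalIntegrable γ' MeasureTheory.volume s t :=
    (hγ'cont.mono (by rw [uIcc_of_le hst]; exact fun u hu => hs.trans hu.1)).intervalIntegrable
  have h1 : γ t - γ s = ∫ u in s..t, γ' u := by
    refine (integral_eq_sub_of_hasDerivAt (fun u hu => hderiv u ?_) hIγ').symm
    rw [uIcc_of_le hst] at hu; exact hs.trans hu.1
  have h2l : (t - s) * γ' s ≤ ∫ u in s..t, γ' u := by
    have := integral_mono_on (μ := MeasureTheory.volume) (f := fun _ => γ' s) (g := γ')
      hst intervalIntegrable_const hIγ'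
      (fun u hu => hγ'mono.monotoneOn hs (hs.trans hu.1) hu.1)
    simpa using this
  have h2r : (∫ u in s..t, γ' u) ≤ (t - s) * γ' t := by
    have := integral_mono_on (μ := MeasureTheory.volume) (f := γ') (g := fun _ => γ' t)
      hst hIγ' intervalIntegrable_const
      (fun u hu => hγ'mono.monotoneOn (hs.trans hu.1) ht hu.2)
    simpa using this
  -- integrability of γinv on subintervals
  have hIinv : ∀ c d : ℝ, 0 ≤ c → 0 ≤ d → IntervalIntegrable γinv MeasureTheory.volume c d := by
    intro c d hc hd
    refine (hinvmono.mono (fun u hu => ?_)).intervalIntegrable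
    rcases Set.mem_uIcc.mp hu with h | h
    exacts [hc.trans h.1, hd.trans h.1]
  have h3 : (∫ u in (0:ℝ)..γ' t, γinv u)
      = (∫ u in (0:ℝ)..γ' s, γinv u) + ∫ u in γ' s..γ' t, γinv u :=
    (integral_add_adjacent_intervals (hIinv 0 (γ' s) le_rfl hs') (hIinv (γ' s) (γ' t) hs' ht'0)).symm
  have h4l : (γ' t - γ' s) * s ≤ ∫ u in γ' s..γ' t, γinv u := by
    have := integral_mono_on (μ := MeasureTheory.volume) (f := fun _ => s) (g := γinv)
      ht' intervalIntegrable_const (hIinv (γ' s) (γ' t) hs' ht'0)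
      (fun u hu => by
        have hu0 : (0:ℝ) ≤ u := hs'.trans hu.1
        have : γinv (γ' s) ≤ γinv u := hinvmono hs' hu0 hu.1
        rwa [hinv_left s hs] at this)
    simpa using this
  have h4r : (∫ u in γ' s..γ' t, γinv u) ≤ (γ' t - γ' s) * t := by
    have := integral_mono_on (μ := MeasureTheory.volume) (f := γinv) (g := fun _ => t)
      ht' (hIinv (γ' s) (γ' t) hs' ht'0) intervalIntegrable_const
      (fun u hu => by
        have hu0 : (0:ℝ) ≤ u := hs'.trans hu.1
        have : γinv u ≤ γinv (γ' t) := hinvmono hu0 ht'0 hu.2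
        rwa [hinv_left t ht] at this)
    simpa using this
  rw [abs_le]
  constructor <;> nlinarith [h1, h2l, h2r, h4l, h4r]

-- Young equality along the curve
lemma young_psi_zero (γ γ' γinv : ℝ → ℝ)
    (hderiv : ∀ x ∈ Ici (0:ℝ), HasDerivAt γ (γ' x) x)
    (hγ0 : γ 0 = 0)
    (hγ'0 : γ' 0 = 0) (hγ'mono : StrictMonoOn γ' (Ici 0))
    (hγ'cont : ContinuousOn γ' (Ici 0))
    (hinv_nonneg : ∀ r ∈ Ici (0:ℝ), γinv r ∈ Ici (0:ℝ))
    (hinv_right : ∀ r ∈ Ici (0:ℝ), γ' (γinv r) = r)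
    (hinv_left : ∀ r ∈ Ici (0:ℝ), γinv (γ' r) = r)
    {a : ℝ} (ha : 0 ≤ a) :
    γ a + (∫ u in (0:ℝ)..γ' a, γinv u) = a * γ' a := by
  set ψ : ℝ → ℝ := fun r => γ r + (∫ u in (0:ℝ)..γ' r, γinv u) - r * γ' r with hψ
  have hψ0 : ψ 0 = 0 := by simp [hψ, hγ0, hγ'0]
  suffices h : ψ a = 0 by
    have := h; simp only [hψ] at this; linarith
  have key : ∀ n : ℕ, 0 < n → |ψ a| ≤ (a / n) * γ' a := by
    intro n hn
    have hn' : (0:ℝ) < n := Nat.cast_pos.mpr hn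
    set f : ℕ → ℝ := fun i => ψ (i * a / n) with hf
    have hfa : f n = ψ a := by simp only [hf]; rw [mul_div_cancel_left₀ a hn'.ne']
    have hf0 : f 0 = 0 := by simpa [hf] using hψ0
    have htele : ∑ i ∈ Finset.range n, (f (i + 1) - f i) = ψ a := by
      rw [Finset.sum_range_sub f n, hfa, hf0, sub_zero]
    set g : ℕ → ℝ := fun i => γ' (i * a / n) with hg
    have hstep : ∀ i ∈ Finset.range n,
        |f (i + 1) - f i| ≤ (a / n) * (g (i + 1) - g i) := by
      intro i _
      have hi0 : (0:ℝ) ≤ i * a / n := by positivity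
      have hle : (i : ℝ) * a / n ≤ (i + 1) * a / n := by
        apply (div_le_div_iff_of_pos_right hn').mpr
        nlinarith
      have := young_psi_step γ γ' γinv hderiv hγ'0 hγ'mono hγ'cont
        hinv_nonneg hinv_right hinv_left hi0 hle
      have hd : ((i:ℝ) + 1) * a / n - i * a / n = a / n := by ring
      calc |f (i + 1) - f i| ≤ (((i:ℝ) + 1) * a / n - i * a / n) *
            (γ' (((i:ℝ) + 1) * a / n) - γ' ((i:ℝ) * a / n)) := by
            simpa [hf, Nat.cast_add, Nat.cast_one] using this
        _ = (a / n) * (g (i + 1) - g i) := by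
            rw [hd, hg]; push_cast; ring_nf
    calc |ψ a| = |∑ i ∈ Finset.range n, (f (i + 1) - f i)| := by rw [htele]
      _ ≤ ∑ i ∈ Finset.range n, |f (i + 1) - f i| := Finset.abs_sum_le_sum_abs _ _
      _ ≤ ∑ i ∈ Finset.range n, (a / n) * (g (i + 1) - g i) :=
          Finset.sum_le_sum hstep
      _ = (a / n) * ∑ i ∈ Finset.range n, (g (i + 1) - g i) := by
          rw [Finset.mul_sum]
      _ = (a / n) * (g n - g 0) := by rw [Finset.sum_range_sub g n]
      _ = (a / n) * γ' a := by
          have h1 : (n:ℝ) * a / n = a := by field_simp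
          simp [hg, h1, hγ'0]
  have hlim : Filter.Tendsto (fun n : ℕ => (a / n) * γ' a) Filter.atTop (nhds 0) := by
    have : (fun n : ℕ => (a / n) * γ' a) = fun n : ℕ => (a * γ' a) / n := by
      funext n; ring
    rw [this]
    exact tendsto_const_div_atTop_nhds_zero_nat _
  have habs : |ψ a| ≤ 0 := by
    refine ge_of_tendsto hlim ?_
    filter_upwards [Filter.eventually_gt_atTop 0] with n hn
    exact key n hn
  have := abs_nonneg (ψ a)
  have : |ψ a| = 0 := le_antisymm habs this
  exact abs_eq_zero.mp this

/-- Equality case of generalized Young's inequality: for nonzero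
`x, y ∈ ℝⁿ`, `⟨x, y⟩ = γ ‖x‖ + ℓγ ‖y‖` iff `y = γ'(‖x‖) • x / ‖x‖`. -/
theorem generalized_young_eq_iff (n : ℕ) (γ γ' γinv : ℝ → ℝ)
    (hderiv : ∀ x ∈ Ici (0:ℝ), HasDerivAt γ (γ' x) x)
    (hγ0 : γ 0 = 0) (hγmono : StrictMonoOn γ (Ici 0))
    (hγcont : ContinuousOn γ (Ici 0))
    (hγunb : ∀ M : ℝ, ∃ r ∈ Ici (0:ℝ), γ r > M)
    (hγ'0 : γ' 0 = 0) (hγ'mono : StrictMonoOn γ' (Ici 0))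
    (hγ'cont : ContinuousOn γ' (Ici 0))
    (hγ'unb : ∀ M : ℝ, ∃ r ∈ Ici (0:ℝ), γ' r > M)
    (hinv_nonneg : ∀ r ∈ Ici (0:ℝ), γinv r ∈ Ici (0:ℝ))
    (hinv_right : ∀ r ∈ Ici (0:ℝ), γ' (γinv r) = r)
    (hinv_left : ∀ r ∈ Ici (0:ℝ), γinv (γ' r) = r)
    (x y : EuclideanSpace ℝ (Fin n)) (hx : x ≠ 0) (hy : y ≠ 0) :
    ⟪x, y⟫ = γ ‖x‖ + (∫ s in (0:ℝ)..‖y‖, γinv s) ↔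
      y = (γ' ‖x‖ / ‖x‖) • x := by
  have ha : (0:ℝ) < ‖x‖ := norm_pos_iff.mpr hx
  have hb : (0:ℝ) < ‖y‖ := norm_pos_iff.mpr hy
  set a := ‖x‖
  set b := ‖y‖
  have hinvmono : MonotoneOn γinv (Ici 0) := by
    intro r hr r' hr' hle
    by_contra hc
    push_neg at hc
    have := hγ'mono (hinv_nonneg r' hr') (hinv_nonneg r hr) hc
    rw [hinv_right r hr, hinv_right r' hr'] at this
    exact absurd this (not_lt.mpr hle)
  have hinvsmono : StrictMonoOn γinv (Ici 0) := by
    intro r hr r' hr' hlt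
    rcases lt_or_eq_of_le (hinvmono hr hr' hlt.le) with h | h
    · exact h
    · exfalso
      have := congrArg γ' h
      rw [hinv_right r hr, hinv_right r' hr'] at this
      exact hlt.ne this
  have hIinv : ∀ c d : ℝ, 0 ≤ c → 0 ≤ d → IntervalIntegrable γinv MeasureTheory.volume c d := by
    intro c d hc hd
    refine (hinvmono.mono (fun u hu => ?_)).intervalIntegrable
    rcases Set.mem_uIcc.mp hu with h | h
    exacts [hc.trans h.1, hd.trans h.1]
  have hga' : (0:ℝ) < γ' a := by
    rw [← hγ'0]; exact hγ'mono self_mem_Ici ha.le ha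
  have hkey := young_psi_zero γ γ' γinv hderiv hγ0 hγ'0 hγ'mono hγ'cont
    hinv_nonneg hinv_right hinv_left ha.le
  have hdiff : ∀ c : ℝ, 0 ≤ c →
      γ a + (∫ s in (0:ℝ)..c, γinv s) - a * c = ∫ u in γ' a..c, (γinv u - a) := by
    intro c hc
    have hsplit := (integral_add_adjacent_intervals
      (hIinv 0 (γ' a) le_rfl hga'.le) (hIinv (γ' a) c hga'.le hc)).symm
    have hsub : (∫ u in γ' a..c, (γinv u - a))
        = (∫ u in γ' a..c, γinv u) - (c - γ' a) * a := by
      rw [intervalIntegral.integral_sub (hIinv _ _ hga'.le hc) intervalIntegrable_const,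
        intervalIntegral.integral_const, smul_eq_mul]
    rw [hsub]; linarith [hsplit, hkey]
  have hyoung_lt : ∀ c : ℝ, 0 ≤ c → c ≠ γ' a →
      a * c < γ a + ∫ s in (0:ℝ)..c, γinv s := by
    intro c hc hne
    have hd := hdiff c hc
    rcases lt_or_gt_of_ne hne with hlt | hgt
    · have heq : (∫ u in γ' a..c, (γinv u - a)) = ∫ u in c..γ' a, (a - γinv u) := by
        rw [intervalIntegral.integral_symm, ← intervalIntegral.integral_neg]
        congr 1; funext u; ring
      have hpos : 0 < ∫ u in c..γ' a, (a - γinv u) := by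
        apply intervalIntegral_pos_of_pos_on
        · exact intervalIntegrable_const.sub (hIinv c (γ' a) hc hga'.le)
        · intro u hu
          have hu0 : (0:ℝ) ≤ u := hc.trans hu.1.le
          have h1 : γinv u < γinv (γ' a) := hinvsmono hu0 hga'.le hu.2
          rw [hinv_left a ha.le] at h1; linarith
        · exact hlt
      linarith
    · have hpos : 0 < ∫ u in γ' a..c, (γinv u - a) := by
        apply intervalIntegral_pos_of_pos_on
        · exact (hIinv (γ' a) c hga'.le hc).sub intervalIntegrable_const
        · intro u hu
          have h1 : γinv (γ' a) < γinv u := hinvsmono hga'.le (hga'.le.trans hu.1.le) hu.1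
          rw [hinv_left a ha.le] at h1; linarith
        · exact hgt
      linarith
  constructor
  · intro h
    have hbeq : b = γ' a := by
      by_contra hne
      have h1 := hyoung_lt b hb.le hne
      have h2 : ⟪x, y⟫ ≤ a * b := real_inner_le_norm x y
      rw [h] at h2
      linarith
    have hinner : ⟪x, y⟫ = a * b := by
      rw [h, hbeq, hkey]
    have hsm : b • x = a • y := inner_eq_norm_mul_iff_real.mp hinner
    have h2 := congrArg (fun v => (a⁻¹ : ℝ) • v) hsm
    simp only [smul_smul, inv_mul_cancel₀ ha.ne', one_smul] at h2
    rw [← hbeq, ← h2]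
    congr 1
    rw [div_eq_mul_inv]; ring
  · intro h
    have hbval : b = γ' a := by
      show ‖y‖ = γ' a
      rw [h, norm_smul, Real.norm_eq_abs, abs_of_pos (div_pos hga' ha)]
      field_simp
      rfl
    have hinner : ⟪x, y⟫ = a * γ' a := by
      rw [h, real_inner_smul_right, real_inner_self_eq_norm_mul_norm]
      field_simp; ring
    rw [hinner, hbval, hkey]
end

section
/- (DSSf differential inequality for the QP filter) Let h : ℝⁿ → ℝ be C¹, f, g₁, g₂ locally Lipschitz vector/matrix fields, u₀ : ℝⁿ → ℝ^{m₂}, ρ a class K function, α an extended class K function, and define ω(x) = ⟨∇h, f + g₂u₀⟩ − ‖g₁ᵀ∇h‖·ρ⁻¹(max{0, −h(x)}) + α(h(x)). Assume ⟨∇h, g₂(x)⟩ = 0 implies ω(x) ≥ 0. Define the QP filter ū(x) = 0 if ω(x) ≥ 0 and ū(x) = −(ω(x)/‖g₂ᵀ∇h‖²)·g₂ᵀ∇h otherwise. Then for every x and every d ∈ ℝ^{m₁}, ⟨∇h(x), f + g₁d + g₂(u₀ + ū)⟩ ≥ −α(h(x)) + ‖g₁ᵀ∇h‖·(ρ⁻¹(max{0,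 −h(x)}) − ‖d‖). -/
open Set
open scoped RealInnerProductSpace

/-- DSSf differential inequality for the QP filter: with
`ω(x) = ⟨∇h, f + g₂u₀⟩ − ‖g₁ᵀ∇h‖·ρ⁻¹(max{0,−h}) + α(h)` and the DSSf-CBF condition
`g₂ᵀ∇h = 0 ⟹ ω ≥ 0`, the QP filter `ū = 0` if `ω ≥ 0`, `ū = −(ω/‖g₂ᵀ∇h‖²)·g₂ᵀ∇h`
otherwise, yields for all `x, d`:
`⟨∇h, f + g₁d + g₂(u₀+ū)⟩ ≥ −α(h) + ‖g₁ᵀ∇h‖·(ρ⁻¹(max{0,−h}) − ‖d‖)`. -/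
theorem qp_filter_dssf_inequality (n m₁ m₂ : ℕ)
    (h : EuclideanSpace ℝ (Fin n) → ℝ)
    (gradh : EuclideanSpace ℝ (Fin n) → EuclideanSpace ℝ (Fin n))
    (hgrad : ∀ x, HasGradientAt h (gradh x) x)
    (f : EuclideanSpace ℝ (Fin n) → EuclideanSpace ℝ (Fin n))
    (g₁ : EuclideanSpace ℝ (Fin n) →
      (EuclideanSpace ℝ (Fin m₁) →L[ℝ] EuclideanSpace ℝ (Fin n)))
    (g₂ : EuclideanSpace ℝ (Fin n) →
      (EuclideanSpace ℝ (Fin m₂) →L[ℝ] EuclideanSpace ℝ (Fin n)))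
    (u₀ : EuclideanSpace ℝ (Fin n) → EuclideanSpace ℝ (Fin m₂))
    (ρ ρinv : ℝ → ℝ) (hρ0 : ρ 0 = 0) (hρmono : StrictMonoOn ρ (Ici 0))
    (hρcont : ContinuousOn ρ (Ici 0))
    (hρinv_nonneg : ∀ r ≥ (0:ℝ), 0 ≤ ρinv r)
    (hρinv : ∀ r ≥ (0:ℝ), ρ (ρinv r) = r)
    (α : ℝ → ℝ) (hα0 : α 0 = 0) (hαmono : StrictMono α)
    -- transposes `g₁ᵀ∇h` and `g₂ᵀ∇h`:
    (b₁ : EuclideanSpace ℝ (Fin n) → EuclideanSpace ℝ (Fin m₁))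
    (hb₁ : ∀ x, b₁ x = ContinuousLinearMap.adjoint (g₁ x) (gradh x))
    (b₂ : EuclideanSpace ℝ (Fin n) → EuclideanSpace ℝ (Fin m₂))
    (hb₂ : ∀ x, b₂ x = ContinuousLinearMap.adjoint (g₂ x) (gradh x))
    (ω : EuclideanSpace ℝ (Fin n) → ℝ)
    (hω : ∀ x, ω x = ⟪gradh x, f x + g₂ x (u₀ x)⟫
      - ‖b₁ x‖ * ρinv (max 0 (-(h x))) + α (h x))
    (hcbf : ∀ x, b₂ x = 0 → 0 ≤ ω x)
    (ubar : EuclideanSpace ℝ (Fin n) → EuclideanSpace ℝ (Fin m₂))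
    (hubar : ∀ x, ubar x =
      if 0 ≤ ω x then 0 else (-(ω x / ‖b₂ x‖^2)) • b₂ x) :
    ∀ (x : EuclideanSpace ℝ (Fin n)) (d : EuclideanSpace ℝ (Fin m₁)),
      ⟪gradh x, f x + g₁ x d + g₂ x (u₀ x + ubar x)⟫ ≥
        -α (h x) + ‖b₁ x‖ * (ρinv (max 0 (-(h x))) - ‖d‖) := by
  intro x d
  have key1 : ⟪gradh x, (g₁ x) d⟫ = ⟪b₁ x, d⟫ := by
    rw [hb₁]; rw [ContinuousLinearMap.adjoint_inner_left]
  have key2 : ∀ v, ⟪gradh x, (g₂ x) v⟫ = ⟪b₂ x, v⟫ := by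
    intro v; rw [hb₂]; rw [ContinuousLinearMap.adjoint_inner_left]
  have cs : ⟪b₁ x, d⟫ ≥ -(‖b₁ x‖ * ‖d‖) := by
    have := abs_real_inner_le_norm (b₁ x) d
    linarith [neg_abs_le (⟪b₁ x, d⟫)]
  have expand : ⟪gradh x, f x + g₁ x d + g₂ x (u₀ x + ubar x)⟫
      = ⟪gradh x, f x + g₂ x (u₀ x)⟫ + ⟪b₁ x, d⟫ + ⟪b₂ x, ubar x⟫ := by
    rw [map_add (g₂ x)]
    rw [show f x + g₁ x d + (g₂ x (u₀ x) + g₂ x (ubar x))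
      = (f x + g₂ x (u₀ x)) + g₁ x d + g₂ x (ubar x) by abel]
    rw [inner_add_right, inner_add_right, key1, key2]
  have hωx := hω x
  by_cases hc : 0 ≤ ω x
  · have hu : ubar x = 0 := by rw [hubar]; simp [hc]
    have : ⟪b₂ x, ubar x⟫ = 0 := by rw [hu, inner_zero_right]
    rw [expand, this]
    nlinarith [cs]
  · push_neg at hc
    have hb2ne : b₂ x ≠ 0 := fun hz => absurd (hcbf x hz) (not_le.mpr hc)
    have hb2norm : ‖b₂ x‖ ^ 2 ≠ 0 := pow_ne_zero _ (norm_ne_zero_iff.mpr hb2ne)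
    have hu : ubar x = (-(ω x / ‖b₂ x‖^2)) • b₂ x := by
      rw [hubar]; simp [not_le.mpr hc]
    have : ⟪b₂ x, ubar x⟫ = -(ω x) := by
      rw [hu, inner_smul_right, real_inner_self_eq_norm_sq]
      field_simp
    rw [expand, this]
    nlinarith [cs]
end

section
/- (Non-overshooting sandwich, disturbance-free pointwise version) Let h : ℝⁿ → ℝ be C¹, f, g locally Lipschitz, u₀ : ℝⁿ → ℝᵐ, and α₀ ≤ α extended class K functions such that ω₀(x) := ⟨∇h, f + g u₀⟩ + α₀(h(x)) ≤ 0 for all x, and ⟨∇h, g(x)⟩ = 0 ⟹ ω(x) := ⟨∇h, f + g u₀⟩ + α(h(x)) ≥ 0. Define u(x) = u₀(x) + (gᵀ∇h/‖gᵀ∇h‖²)·max{0, −ω(x)} (interpreted as u₀ when gᵀ∇h = 0). Then for every x ∈ ℝⁿ: −α(h(x)) ≤ ⟨∇h(x), f(x) + g(x)u(x)⟩ ≤ −α₀(h(x)). -/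
open Set
open scoped RealInnerProductSpace

/-- Non-overshooting sandwich, disturbance-free pointwise version:
with `ω₀(x) = ⟨∇h, f + g u₀⟩ + α₀(h(x)) ≤ 0` everywhere and the CBF condition
`gᵀ∇h = 0 ⟹ ω(x) = ⟨∇h, f + g u₀⟩ + α(h(x)) ≥ 0` (where `α₀ ≤ α` are extended
class K), the QP feedback `u = u₀ + (gᵀ∇h/‖gᵀ∇h‖²)·max{0, −ω}` yields, for all `x`,
`−α(h(x)) ≤ ⟨∇h, f + g u⟩ ≤ −α₀(h(x))`. -/
theorem non_overshooting_sandwich (n m : ℕ)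
    (h : EuclideanSpace ℝ (Fin n) → ℝ)
    (gradh : EuclideanSpace ℝ (Fin n) → EuclideanSpace ℝ (Fin n))
    (hgrad : ∀ x, HasGradientAt h (gradh x) x)
    (f : EuclideanSpace ℝ (Fin n) → EuclideanSpace ℝ (Fin n))
    (g : EuclideanSpace ℝ (Fin n) →
      (EuclideanSpace ℝ (Fin m) →L[ℝ] EuclideanSpace ℝ (Fin n)))
    (u₀ : EuclideanSpace ℝ (Fin n) → EuclideanSpace ℝ (Fin m))
    (α₀ α : ℝ → ℝ) (hα₀0 : α₀ 0 = 0) (hα0 : α 0 = 0)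
    (hα₀mono : StrictMono α₀) (hαmono : StrictMono α)
    (hle : ∀ r, α₀ r ≤ α r)
    (b : EuclideanSpace ℝ (Fin n) → EuclideanSpace ℝ (Fin m))
    (hb : ∀ x, b x = ContinuousLinearMap.adjoint (g x) (gradh x))
    (ω₀ ω : EuclideanSpace ℝ (Fin n) → ℝ)
    (hω₀ : ∀ x, ω₀ x = ⟪gradh x, f x + g x (u₀ x)⟫ + α₀ (h x))
    (hω : ∀ x, ω x = ⟪gradh x, f x + g x (u₀ x)⟫ + α (h x))
    (hω₀le : ∀ x, ω₀ x ≤ 0)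
    (hcbf : ∀ x, b x = 0 → 0 ≤ ω x)
    (u : EuclideanSpace ℝ (Fin n) → EuclideanSpace ℝ (Fin m))
    -- when `b x = 0` the scalar factor is `max{0,−ω}/0 = 0`, so `u x = u₀ x`:
    (hu : ∀ x, u x = u₀ x + (max 0 (-(ω x)) / ‖b x‖^2) • b x) :
    ∀ x : EuclideanSpace ℝ (Fin n),
      -α (h x) ≤ ⟪gradh x, f x + g x (u x)⟫ ∧
        ⟪gradh x, f x + g x (u x)⟫ ≤ -α₀ (h x) := by

  intro x
  set c := max 0 (-(ω x)) / ‖b x‖^2 with hc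
  have key : ⟪gradh x, f x + g x (u x)⟫
      = ⟪gradh x, f x + g x (u₀ x)⟫ + c * ‖b x‖^2 := by
    have hadj : ⟪gradh x, g x (b x)⟫ = ‖b x‖^2 := by
      have h1 : ⟪b x, b x⟫ = ⟪gradh x, g x (b x)⟫ := by
        conv_lhs => rw [hb]
        rw [ContinuousLinearMap.adjoint_inner_left, ← hb]
      rw [← h1, real_inner_self_eq_norm_sq]
    rw [hu, map_add, map_smul]
    rw [inner_add_right, inner_add_right, inner_add_right, inner_smul_right, hadj]
    ring
  have hipω : ⟪gradh x, f x + g x (u₀ x)⟫ = ω x - α (h x) := by rw [hω]; ring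
  have hipω₀ : ⟪gradh x, f x + g x (u₀ x)⟫ = ω₀ x - α₀ (h x) := by rw [hω₀]; ring
  by_cases hbz : b x = 0
  · have hcz : c * ‖b x‖^2 = 0 := by simp [hbz]
    rw [key, hcz, add_zero]
    have h1 := hcbf x hbz
    exact ⟨by rw [hipω]; linarith, by rw [hipω₀]; linarith [hω₀le x]⟩
  · have hbn : ‖b x‖^2 ≠ 0 := pow_ne_zero 2 (norm_ne_zero_iff.mpr hbz)
    have hcval : c * ‖b x‖^2 = max 0 (-(ω x)) := by
      rw [hc]; field_simp
    rw [key, hcval]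
    constructor
    · have : -(ω x) ≤ max 0 (-(ω x)) := le_max_right _ _
      linarith [hipω ▸ le_refl (⟪gradh x, f x + g x (u₀ x)⟫ : ℝ), hipω.ge, hipω.le]
    · rcases le_total (ω x) 0 with h1 | h1
      · rw [max_eq_right (by linarith)]
        linarith [hle (h x), hipω.le, hipω.ge]
      · rw [max_eq_left (by linarith)]
        linarith [hω₀le x, hipω₀.le, hipω₀.ge]
end
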